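/- Discrete conservation of total (bulk plus surface) mass for the conservative coupled bulk–surface scheme: suppose the discrete pair u_h = (u_B, u_S) satisfies the scheme equation A^n(u_h, v) + S^n(u_h, v) = L^n(v) for the constant test pair v = (v_B, v_S) = (1, 1), whose elementwise representatives are the constant polynomial 1. Since ∂ₜ1 = 0, all spatial (and tangential) gradients of 1 vanish, all jumps of normal derivatives of the constant function vanish, and the nonlinear coupling term carries the factor v_B − v_S = 0, it follows that [∫_{Ω(t_n)} u_B(t_n,x) dx + ∫_{Γ(t_n)} u_S(t_n,s) dσ_{t_n}(s)] − [∫_{Ω(t_{n−1})} u_B^-(x) dx + ∫_{Γ(t_{n−1})} u_S^-(s) dσ_{t_{n−1}}(s)] = ∫_{t_{n−1}}^{t_n} ( ∫_{Ω(t)} f_B(t,x) dx + ∫_{Γ(t)} f_S(t,s) dσ_t(s) ) dt. -/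

import Mathlib

open MeasureTheory

noncomputable section

/-- Euclidean space `ℝ^d`. -/
abbrev Euc (d : ℕ) : Type := EuclideanSpace ℝ (Fin d)

/-- First-order directional derivative in the (fixed) direction `n`. -/
noncomputable def dirDeriv {d : ℕ} (n : Euc d) (g : Euc d → ℝ) : Euc d → ℝ :=
  fun x => fderiv ℝ g x n

/-- `i`-th order directional derivative in the fixed direction `n`. -/
noncomputable def dirDerivIter {d : ℕ} (n : Euc d) (i : ℕ) (g : Euc d → ℝ) : Euc d → ℝ :=
  (dirDeriv n)^[i] g

/-- First-order directional derivative in the direction of a varying field `n`. -/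
noncomputable def dirDerivField {d : ℕ} (n : Euc d → Euc d) (g : Euc d → ℝ) : Euc d → ℝ :=
  fun x => fderiv ℝ g x (n x)

/-- `i`-th order directional derivative in the direction of a varying field `n`. -/
noncomputable def dirDerivFieldIter {d : ℕ} (n : Euc d → Euc d) (i : ℕ)
    (g : Euc d → ℝ) : Euc d → ℝ :=
  (dirDerivField n)^[i] g

/-- Tangential gradient with respect to the unit normal field `n`:
`∇_Γ g = ∇g − ⟨∇g, n⟩ n`. -/
noncomputable def tangGrad {d : ℕ} (n : Euc d → Euc d) (g : Euc d → ℝ) (x : Euc d) :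
    Euc d :=
  gradient g x - (inner ℝ (gradient g x) (n x) : ℝ) • n x


lemma dirDeriv_const {d : ℕ} (n : Euc d) (c : ℝ) :
    dirDeriv n (fun _ : Euc d => c) = fun _ => 0 := by
  funext x; simp [dirDeriv]

lemma dirDerivIter_const {d : ℕ} (n : Euc d) (c : ℝ) {i : ℕ} (hi : 1 ≤ i) :
    dirDerivIter n i (fun _ : Euc d => c) = fun _ => 0 := by
  have hz : ∀ k : ℕ, (dirDeriv n)^[k] (fun _ : Euc d => (0:ℝ)) = fun _ => 0 := by
    intro k
    induction k with
    | zero => rfl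
    | succ k ih => rw [Function.iterate_succ_apply, dirDeriv_const]; exact ih
  obtain ⟨k, rfl⟩ := Nat.exists_eq_add_of_le hi
  unfold dirDerivIter
  rw [add_comm, Function.iterate_succ_apply, dirDeriv_const, hz]

lemma dirDerivField_const {d : ℕ} (n : Euc d → Euc d) (c : ℝ) :
    dirDerivField n (fun _ : Euc d => c) = fun _ => 0 := by
  funext x; simp [dirDerivField]

lemma dirDerivFieldIter_const {d : ℕ} (n : Euc d → Euc d) (c : ℝ) {i : ℕ} (hi : 1 ≤ i) :
    dirDerivFieldIter n i (fun _ : Euc d => c) = fun _ => 0 := by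
  have hz : ∀ k : ℕ, (dirDerivField n)^[k] (fun _ : Euc d => (0:ℝ)) = fun _ => 0 := by
    intro k
    induction k with
    | zero => rfl
    | succ k ih => rw [Function.iterate_succ_apply, dirDerivField_const]; exact ih
  obtain ⟨k, rfl⟩ := Nat.exists_eq_add_of_le hi
  unfold dirDerivFieldIter
  rw [add_comm, Function.iterate_succ_apply, dirDerivField_const, hz]

/-- Discrete conservation of total (bulk plus surface) mass for the conservative coupled
bulk–surface scheme: testing `Aⁿ(u_h,v) + Sⁿ(u_h,v) = Lⁿ(v)` with the constant test
pair `v = (1,1)` yields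
`[∫_{Ω(tₙ)} u_B + ∫_{Γ(tₙ)} u_S] − [∫_{Ω(tₙ₋₁)} u_B⁻ + ∫_{Γ(tₙ₋₁)} u_S⁻]
  = ∫_{Iₙ} (∫_{Ω(t)} f_B + ∫_{Γ(t)} f_S) dt`. -/
theorem coupled_bulk_surface_mass_conservation
    (d : ℕ) (hd : 1 ≤ d)
    (tnm1 tn : ℝ) (htn : tnm1 < tn)
    -- evolving bulk domains and surfaces
    (Ω : ℝ → Set (Euc d))
    (hΩ : ∀ s ∈ Set.Icc tnm1 tn, Bornology.IsBounded (Ω s) ∧ MeasurableSet (Ω s))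
    (Γ : ℝ → Set (Euc d))
    (hΓ : ∀ s ∈ Set.Icc tnm1 tn, MeasurableSet (Γ s))
    -- surface measures: (d−1)-dimensional Hausdorff measure restricted to Γ(s), finite
    (σ : ℝ → Measure (Euc d))
    (hσ : ∀ s : ℝ, σ s = (μH[(d : ℝ) - 1] : Measure (Euc d)).restrict (Γ s))
    (hσfin : ∀ s ∈ Set.Icc tnm1 tn, σ s Set.univ < ⊤)
    -- bounded continuous velocity field
    (β : ℝ → Euc d → Euc d)
    (hβcont : Continuous fun p : ℝ × Euc d => β p.1 p.2)
    (hβbdd : ∃ C : ℝ, ∀ (t : ℝ) (x : Euc d), ‖β t x‖ ≤ C)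
    -- diffusion coefficients
    (D DΓ : ℝ) (hD : 0 < D) (hDΓ : 0 < DΓ)
    -- integrable source terms
    (fB fS : ℝ → Euc d → ℝ)
    (hfB : ∀ s ∈ Set.Icc tnm1 tn, IntegrableOn (fB s) (Ω s))
    (hfS : ∀ s ∈ Set.Icc tnm1 tn, Integrable (fS s) (σ s))
    (hfBint : IntervalIntegrable (fun s => ∫ x in Ω s, fB s x) volume tnm1 tn)
    (hfSint : IntervalIntegrable (fun s => ∫ x, fS s x ∂(σ s)) volume tnm1 tn)
    -- initial data from the previous slab
    (uBm uSm : Euc d → ℝ)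
    (huBm : IntegrableOn uBm (Ω tnm1)) (huSm : Integrable uSm (σ tnm1))
    -- discrete solutions, C¹ on each space-time element, integrable at tₙ
    (uB uS : ℝ → Euc d → ℝ)
    (𝓚 : Finset (Set (ℝ × Euc d)))
    (huBC1 : ∀ K ∈ 𝓚, ContDiffOn ℝ 1 (fun p : ℝ × Euc d => uB p.1 p.2) K)
    (huSC1 : ∀ K ∈ 𝓚, ContDiffOn ℝ 1 (fun p : ℝ × Euc d => uS p.1 p.2) K)
    (huBint : IntegrableOn (uB tn) (Ω tn)) (huSint : Integrable (uS tn) (σ tn))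
    -- unit normal field on Γ(t)
    (nΓ : ℝ → Euc d → Euc d)
    (hnΓ : ∀ (s : ℝ), ∀ x ∈ Γ s, ‖nΓ s x‖ = 1)
    -- bulk faces and surface faces with normals, measures and parameters
    (ιB ιS : Type) (𝓕B : Finset ιB) (𝓕S : Finset ιS)
    (nFB : ιB → Euc d) (hnFB : ∀ F, ‖nFB F‖ = 1)
    (nFS : ιS → Euc d) (hnFS : ∀ F, ‖nFS F‖ = 1)
    (σFB : ιB → Measure (Euc d)) (σFS : ιS → Measure (Euc d))
    (m : ℕ) (τB : ιB → ℕ → ℝ) (τS : ιS → ℕ → ℝ) (τΓ : ℕ → ℝ)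
    (hτB : ∀ F i, 0 < τB F i) (hτS : ∀ F i, 0 < τS F i) (hτΓ : ∀ i, 0 < τΓ i)
    (h : ℝ) (hh : 0 < h)
    -- the two smooth elementwise representatives of u_B, u_S on the elements sharing a face
    (uBRep : ιB → Fin 2 → ℝ → Euc d → ℝ) (uSRep : ιS → Fin 2 → ℝ → Euc d → ℝ)
    -- the constant test pair v = (v_B, v_S) = (1, 1), with representatives ≡ 1
    (vB vS : ℝ → Euc d → ℝ)
    (hvB : ∀ (t : ℝ) (x : Euc d), vB t x = 1)
    (hvS : ∀ (t : ℝ) (x : Euc d), vS t x = 1)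
    (vBRep : ιB → Fin 2 → ℝ → Euc d → ℝ) (vSRep : ιS → Fin 2 → ℝ → Euc d → ℝ)
    (hvBRep : ∀ (F : ιB) (j : Fin 2) (t : ℝ) (x : Euc d), vBRep F j t x = 1)
    (hvSRep : ∀ (F : ιS) (j : Fin 2) (t : ℝ) (x : Euc d), vSRep F j t x = 1)
    -- the scheme equation Aⁿ(u_h, v) + Sⁿ(u_h, v) = Lⁿ(v) for this v
    (hscheme :
      -- Aⁿ(u, v)
      ((∫ x in Ω tn, uB tn x * vB tn x)
        + (∫ x, uS tn x * vS tn x ∂(σ tn))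
        - (∫ t in tnm1..tn, ∫ x in Ω t, uB t x * deriv (fun s => vB s x) t)
        - (∫ t in tnm1..tn, ∫ x, uS t x * deriv (fun s => vS s x) t ∂(σ t))
        - (∫ t in tnm1..tn, ∫ x in Ω t,
            uB t x * (inner ℝ (β t x) (gradient (vB t) x) : ℝ))
        - (∫ t in tnm1..tn, ∫ x,
            uS t x * (inner ℝ (β t x) (gradient (vS t) x) : ℝ) ∂(σ t))
        + (∫ t in tnm1..tn, ∫ x in Ω t,
            D * (inner ℝ (gradient (uB t) x) (gradient (vB t) x) : ℝ))
        + (∫ t in tnm1..tn, ∫ x,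
            DΓ * (inner ℝ (tangGrad (nΓ t) (uS t) x) (tangGrad (nΓ t) (vS t) x) : ℝ) ∂(σ t))
        + (∫ t in tnm1..tn, ∫ x,
            (uB t x - uS t x - uB t x * uS t x) * (vB t x - vS t x) ∂(σ t)))
      -- Sⁿ(u, v)
      + (∫ t in tnm1..tn,
          ((∑ F ∈ 𝓕B, ∑ i ∈ Finset.Icc 1 m,
              τB F i * h ^ (2 * i - 1) *
                ∫ x, (dirDerivIter (nFB F) i (uBRep F 0 t) x
                        - dirDerivIter (nFB F) i (uBRep F 1 t) x)
                    * (dirDerivIter (nFB F) i (vBRep F 0 t) x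
                        - dirDerivIter (nFB F) i (vBRep F 1 t) x) ∂(σFB F))
            + (∑ F ∈ 𝓕S, ∑ i ∈ Finset.Icc 1 m,
                τS F i * h ^ (2 * i - 2) *
                  ∫ x, (dirDerivIter (nFS F) i (uSRep F 0 t) x
                          - dirDerivIter (nFS F) i (uSRep F 1 t) x)
                      * (dirDerivIter (nFS F) i (vSRep F 0 t) x
                          - dirDerivIter (nFS F) i (vSRep F 1 t) x) ∂(σFS F))
            + (∑ i ∈ Finset.Icc 1 m,
                τΓ i * h ^ (2 * i - 2) *
                  ∫ x, dirDerivFieldIter (nΓ t) i (uS t) x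
                      * dirDerivFieldIter (nΓ t) i (vS t) x ∂(σ t))))
      -- Lⁿ(v)
      = (∫ x in Ω tnm1, uBm x * vB tnm1 x)
        + (∫ x, uSm x * vS tnm1 x ∂(σ tnm1))
        + (∫ t in tnm1..tn, ∫ x in Ω t, fB t x * vB t x)
        + (∫ t in tnm1..tn, ∫ x, fS t x * vS t x ∂(σ t))) :
    ((∫ x in Ω tn, uB tn x) + (∫ x, uS tn x ∂(σ tn)))
      - ((∫ x in Ω tnm1, uBm x) + (∫ x, uSm x ∂(σ tnm1)))
      = ∫ t in tnm1..tn,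
          ((∫ x in Ω t, fB t x) + (∫ x, fS t x ∂(σ t))) := by
  
  have hvB' : ∀ t : ℝ, vB t = fun _ => (1:ℝ) := fun t => funext (hvB t)
  have hvS' : ∀ t : ℝ, vS t = fun _ => (1:ℝ) := fun t => funext (hvS t)
  have hvBRep' : ∀ (F : ιB) (j : Fin 2) (t : ℝ), vBRep F j t = fun _ => (1:ℝ) :=
    fun F j t => funext (hvBRep F j t)
  have hvSRep' : ∀ (F : ιS) (j : Fin 2) (t : ℝ), vSRep F j t = fun _ => (1:ℝ) :=
    fun F j t => funext (hvSRep F j t)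
  have hIterB : ∀ (F : ιB) (i : ℕ), i ∈ Finset.Icc 1 m →
      dirDerivIter (nFB F) i (fun _ : Euc d => (1:ℝ)) = fun _ => 0 :=
    fun F i hi => dirDerivIter_const (nFB F) 1 (Finset.mem_Icc.mp hi).1
  have hIterS : ∀ (F : ιS) (i : ℕ), i ∈ Finset.Icc 1 m →
      dirDerivIter (nFS F) i (fun _ : Euc d => (1:ℝ)) = fun _ => 0 :=
    fun F i hi => dirDerivIter_const (nFS F) 1 (Finset.mem_Icc.mp hi).1
  have hIterΓ : ∀ (t : ℝ) (i : ℕ), i ∈ Finset.Icc 1 m →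
      dirDerivFieldIter (nΓ t) i (fun _ : Euc d => (1:ℝ)) = fun _ => 0 :=
    fun t i hi => dirDerivFieldIter_const (nΓ t) 1 (Finset.mem_Icc.mp hi).1
  simp only [hvB', hvS', hvBRep', hvSRep'] at hscheme
  have hsumB : ∀ t : ℝ, (∑ F ∈ 𝓕B, ∑ i ∈ Finset.Icc 1 m,
      τB F i * h ^ (2 * i - 1) *
        ∫ x, (dirDerivIter (nFB F) i (uBRep F 0 t) x
                - dirDerivIter (nFB F) i (uBRep F 1 t) x)
            * (dirDerivIter (nFB F) i (fun _ : Euc d => (1:ℝ)) x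
                - dirDerivIter (nFB F) i (fun _ : Euc d => (1:ℝ)) x) ∂(σFB F)) = 0 := by
    intro t
    refine Finset.sum_eq_zero fun F _ => Finset.sum_eq_zero fun i hi => ?_
    rw [hIterB F i hi]; simp
  have hsumS : ∀ t : ℝ, (∑ F ∈ 𝓕S, ∑ i ∈ Finset.Icc 1 m,
      τS F i * h ^ (2 * i - 2) *
        ∫ x, (dirDerivIter (nFS F) i (uSRep F 0 t) x
                - dirDerivIter (nFS F) i (uSRep F 1 t) x)
            * (dirDerivIter (nFS F) i (fun _ : Euc d => (1:ℝ)) x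
                - dirDerivIter (nFS F) i (fun _ : Euc d => (1:ℝ)) x) ∂(σFS F)) = 0 := by
    intro t
    refine Finset.sum_eq_zero fun F _ => Finset.sum_eq_zero fun i hi => ?_
    rw [hIterS F i hi]; simp
  have hsumΓ : ∀ t : ℝ, (∑ i ∈ Finset.Icc 1 m,
      τΓ i * h ^ (2 * i - 2) *
        ∫ x, dirDerivFieldIter (nΓ t) i (uS t) x
            * dirDerivFieldIter (nΓ t) i (fun _ : Euc d => (1:ℝ)) x ∂(σ t)) = 0 := by
    intro t
    refine Finset.sum_eq_zero fun i hi => ?_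
    rw [hIterΓ t i hi]; simp
  simp only [hsumB, hsumS, hsumΓ, deriv_const', gradient_fun_const, tangGrad,
    inner_zero_left, inner_zero_right, zero_smul, sub_zero, zero_sub, sub_self,
    mul_zero, zero_mul, mul_one, neg_zero, integral_zero, Finset.sum_const_zero,
    intervalIntegral.integral_zero, add_zero, zero_add] at hscheme
  rw [intervalIntegral.integral_add hfBint hfSint]
  linarith [hscheme]
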